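/- Let s ≥ 1, t ≥ 1 and λ ≥ 0 be natural numbers and set θ = t·s + λ. Then the map (i, l) ↦ (s−1) + s·i + θ·l is injective on {0,…,t−1} × {0,…,t−1}; i.e., the t² important powers of the AGE code product C_A(x)·C_B(x) are pairwise distinct. -/
import Mathlib

/-- For s ≥ 1, t ≥ 1, λ ≥ 0 and θ = t·s + λ, the map
(i, l) ↦ (s−1) + s·i + θ·l is injective on {0,…,t−1} × {0,…,t−1}:
the t² important powers of the AGE code product C_A(x)·C_B(x) are
pairwise distinct. -/
theorem age_important_powers_distinct (s t lam : ℕ) (hs : 1 ≤ s) (ht : 1 ≤ t) :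
    Set.InjOn (fun p : ℕ × ℕ => (s - 1) + s * p.1 + (t * s + lam) * p.2)
      {p : ℕ × ℕ | p.1 < t ∧ p.2 < t} := by
  intro p hp q hq h
  simp only [Set.mem_setOf_eq] at hp hq
  simp only at h
  set θ := t * s + lam with hθ
  have key : s * p.1 + θ * p.2 = s * q.1 + θ * q.2 := by omega
  have hθpos : 0 < θ := by
    have := Nat.mul_le_mul ht hs
    omega
  have hlt : ∀ r : ℕ × ℕ, r.1 < t → s * r.1 < θ := by
    intro r hr
    calc s * r.1 < s * t := by
          exact Nat.mul_lt_mul_of_pos_left hr (by omega)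
      _ = t * s := Nat.mul_comm s t
      _ ≤ θ := by omega
  have hdiv : ∀ r : ℕ × ℕ, r.1 < t → (s * r.1 + θ * r.2) / θ = r.2 := by
    intro r hr
    rw [Nat.add_mul_div_left _ _ hθpos, Nat.div_eq_of_lt (hlt r hr)]
    omega
  have h2 : p.2 = q.2 := by
    have a := hdiv p hp.1
    have b := hdiv q hq.1
    rw [key] at a
    omega
  have h1 : p.1 = q.1 := by
    rw [h2] at key
    have : s * p.1 = s * q.1 := Nat.add_right_cancel key
    exact Nat.eq_of_mul_eq_mul_left (by omega) this
  exact Prod.ext h1 h2
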